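/- Let W ∈ ℝ^{n×n} be symmetric positive definite, (S_j, q_j)_{j=1}^m a finitely supported sketch distribution with constants θ_j > 0 satisfying the unbiasedness condition ∑_j q_j θ_j Π_{S_j} e = e. Let f_1,…,f_n : ℝ^d → ℝ be differentiable with f := (1/n)∑_i f_i, and let x* ∈ ℝ^d satisfy ∑_i ∇f_i(x*) = 0. Assume the expected smoothness of the stochastic gradient: there is L₁ > 0 such that ∑_j q_j (θ_j/n)² ‖(∇F(x) − ∇F(x*)) Π_{S_j} e‖² ≤ 2L₁ (f(x) − f(x*)) for all x. Let ρ := λmax(W^{1/2}(∑_j q_j θ_j² Π_{S_j} e eᵀ Π_{S_j}ᵀ − e eᵀ)W^{1/2}). Then for every x ∈ ℝ^d and J ∈ ℝ^{d×n}, the gradient estimates g_j := (1/n)Je + (θ_j/n)(∇F(x) − J)Π_{S_j}e satisfy ∑_j q_j ‖g_j‖² ≤ 4L₁ (f(x) − f(x*)) + (2ρ/n²)‖J − ∇F(x*)‖²_{W⁻¹}. -/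

import Mathlib

open Matrix

/-- Weighted Frobenius norm squared: ‖X‖²_{W⁻¹} = Tr(X W⁻¹ Xᵀ). -/
noncomputable def wnorm2 {d n : ℕ} (W : Matrix (Fin n) (Fin n) ℝ)
    (X : Matrix (Fin d) (Fin n) ℝ) : ℝ :=
  Matrix.trace (X * W⁻¹ * Xᵀ)

/-- Largest eigenvalue of a (symmetric) real matrix, as the supremum of its real spectrum. -/
noncomputable def lammax {n : ℕ} (M : Matrix (Fin n) (Fin n) ℝ) : ℝ :=
  sSup (spectrum ℝ M)

/-- The (Euclidean) gradient of `f : ℝ^d → ℝ` at `x`. -/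
noncomputable def grad {d : ℕ} (f : (Fin d → ℝ) → ℝ) (x : Fin d → ℝ) : Fin d → ℝ :=
  fun k => fderiv ℝ f x (Pi.single k 1)

/-- The Jacobian `∇F(x) = [∇f₁(x), …, ∇fₙ(x)] ∈ ℝ^{d×n}`. -/
noncomputable def jac {d n : ℕ} (f : Fin n → (Fin d → ℝ) → ℝ) (x : Fin d → ℝ) :
    Matrix (Fin d) (Fin n) ℝ :=
  Matrix.of fun k i => grad (f i) x k

/-- Squared Euclidean norm. -/
def sq2 {d : ℕ} (v : Fin d → ℝ) : ℝ := ∑ k, (v k) ^ 2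

/-- The all-ones vector `e ∈ ℝⁿ`. -/
def onesV (n : ℕ) : Fin n → ℝ := fun _ => 1

/- ### auxiliary lemmas -/

lemma sq2_smul {d : ℕ} (c : ℝ) (w : Fin d → ℝ) : sq2 (c • w) = c ^ 2 * sq2 w := by
  simp [sq2, Finset.mul_sum, mul_pow]

lemma sq2_add_le {d : ℕ} (u w : Fin d → ℝ) : sq2 (u + w) ≤ 2 * sq2 u + 2 * sq2 w := by
  have h : ∀ k, (u k + w k) ^ 2 ≤ 2 * (u k) ^ 2 + 2 * (w k) ^ 2 := fun k => by nlinarith [sq_nonneg (u k - w k)]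
  calc sq2 (u + w) = ∑ k, (u k + w k) ^ 2 := by simp [sq2]
    _ ≤ ∑ k, (2 * (u k) ^ 2 + 2 * (w k) ^ 2) := Finset.sum_le_sum fun k _ => h k
    _ = 2 * sq2 u + 2 * sq2 w := by simp [sq2, Finset.sum_add_distrib, Finset.mul_sum]

lemma sq2_eq_dot {d : ℕ} (w : Fin d → ℝ) : sq2 w = w ⬝ᵥ w := by
  simp [sq2, dotProduct, pow_two]

lemma quad_le_sSup_spectrum {n : ℕ} (A : Matrix (Fin n) (Fin n) ℝ) (hA : A.IsHermitian)
    (v : Fin n → ℝ) :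
    v ⬝ᵥ A *ᵥ v ≤ sSup (spectrum ℝ A) * (v ⬝ᵥ v) := by
  set ρ := sSup (spectrum ℝ A) with hρ
  have hbdd : BddAbove (spectrum ℝ A) := (Matrix.finite_spectrum A).bddAbove
  have hle : ∀ i, hA.eigenvalues i ≤ ρ := fun i =>
    le_csSup hbdd (hA.eigenvalues_mem_spectrum_real i)
  set U := (hA.eigenvectorUnitary : Matrix (Fin n) (Fin n) ℝ) with hU
  have hsU : star U = Uᵀ := by
    rw [Matrix.star_eq_conjTranspose, Matrix.conjTranspose_eq_transpose_of_trivial]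
  have hUU : U * Uᵀ = 1 := by
    rw [← hsU]; exact (Unitary.mul_star_self_of_mem hA.eigenvectorUnitary.2)
  set w := v ᵥ* U with hw
  have hw2 : star U *ᵥ v = w := by rw [hsU, Matrix.mulVec_transpose]
  have hvv : w ⬝ᵥ w = v ⬝ᵥ v := by
    rw [hw, ← Matrix.mulVec_transpose, Matrix.dotProduct_mulVec, Matrix.vecMul_transpose,
      Matrix.mulVec_mulVec, hUU, Matrix.one_mulVec]
  have hAv : v ⬝ᵥ A *ᵥ v = ∑ i, hA.eigenvalues i * (w i)^2 := by
    conv_lhs => rw [hA.spectral_theorem, Unitary.conjStarAlgAut_apply]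
    rw [← Matrix.mulVec_mulVec, ← Matrix.mulVec_mulVec, hw2, Matrix.dotProduct_mulVec, ← hw]
    simp [Matrix.mulVec_diagonal, dotProduct, Function.comp]
    exact Finset.sum_congr rfl fun i _ => by ring
  rw [hAv, ← hvv]
  have : ρ * (w ⬝ᵥ w) = ∑ i, ρ * (w i)^2 := by
    simp [dotProduct, Finset.mul_sum]; exact Finset.sum_congr rfl fun i _ => by ring
  rw [this]
  exact Finset.sum_le_sum fun i _ =>
    mul_le_mul_of_nonneg_right (hle i) (sq_nonneg _)

lemma trace_sandwich_eq {p n : ℕ} (Y : Matrix (Fin p) (Fin n) ℝ)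
    (A : Matrix (Fin n) (Fin n) ℝ) (hsymm : ∀ i l, A i l = A l i) :
    Matrix.trace (Y * A * Yᵀ) = ∑ k, (Y k) ⬝ᵥ A *ᵥ (Y k) := by
  simp only [Matrix.trace, Matrix.diag, Matrix.mul_apply, Matrix.transpose_apply,
    dotProduct, mulVec, Finset.sum_mul, Finset.mul_sum]
  exact Finset.sum_congr rfl fun k _ => Finset.sum_congr rfl fun i _ =>
    Finset.sum_congr rfl fun l _ => by rw [hsymm i l]; ring

lemma trace_vecMulVec {p n : ℕ} (R : Matrix (Fin p) (Fin n) ℝ) (u : Fin n → ℝ) :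
    Matrix.trace (R * vecMulVec u u * Rᵀ) = (R *ᵥ u) ⬝ᵥ (R *ᵥ u) := by
  simp only [Matrix.trace, Matrix.diag, Matrix.mul_apply, Matrix.transpose_apply,
    vecMulVec_apply, dotProduct, mulVec, Finset.sum_mul, Finset.mul_sum]
  apply Finset.sum_congr rfl
  intro k _
  rw [Finset.sum_comm]
  apply Finset.sum_congr rfl
  intro i _
  apply Finset.sum_congr rfl
  intro l _
  ring

lemma trace_sandwich_le {p n : ℕ} (Y : Matrix (Fin p) (Fin n) ℝ)
    (A : Matrix (Fin n) (Fin n) ℝ) (hA : A.IsHermitian) :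
    Matrix.trace (Y * A * Yᵀ) ≤ sSup (spectrum ℝ A) * Matrix.trace (Y * Yᵀ) := by
  have hsymm : ∀ i l, A i l = A l i := by
    intro i l
    have := congrFun (congrFun hA.eq l) i
    simpa [Matrix.conjTranspose_apply] using this
  rw [trace_sandwich_eq Y A hsymm]
  have hYY : Matrix.trace (Y * Yᵀ) = ∑ k, (Y k) ⬝ᵥ (Y k) := by
    simp [Matrix.trace, Matrix.diag, Matrix.mul_apply, dotProduct]
  rw [hYY, Finset.mul_sum]
  exact Finset.sum_le_sum fun k _ => quad_le_sSup_spectrum A hA (Y k)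

/-- Second moment bound for the JacSketch gradient estimate:
`E‖gᵏ‖² ≤ 4L₁(f(x) − f(x*)) + (2ρ/n²)‖J − ∇F(x*)‖²_{W⁻¹}`. -/
theorem gradient_estimate_second_moment_bound
    {d n m : ℕ}
    (W Wh : Matrix (Fin n) (Fin n) ℝ) (hW : W.PosDef)
    (hWh : Wh.PosDef) (hWh2 : Wh * Wh = W)
    (τs : Fin m → ℕ) (S : ∀ j, Matrix (Fin n) (Fin (τs j)) ℝ)
    (hS : ∀ j, IsUnit ((S j)ᵀ * W * S j))
    (q : Fin m → ℝ) (hq : ∀ j, 0 ≤ q j) (hq1 : ∑ j, q j = 1)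
    (Pr : Fin m → Matrix (Fin n) (Fin n) ℝ)
    (hPr : ∀ j, Pr j = S j * ((S j)ᵀ * W * S j)⁻¹ * (S j)ᵀ * W)
    (θ : Fin m → ℝ) (hθ : ∀ j, 0 < θ j)
    (hunbiased : ∑ j, (q j * θ j) • (Pr j).mulVec (onesV n) = onesV n)
    (f : Fin n → (Fin d → ℝ) → ℝ) (hdiff : ∀ i, Differentiable ℝ (f i))
    (fbar : (Fin d → ℝ) → ℝ) (hfbar : ∀ x, fbar x = (1 / (n : ℝ)) * ∑ i, f i x)
    (xs : Fin d → ℝ) (hcrit : ∑ i, grad (f i) xs = 0)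
    (L₁ : ℝ) (hL₁pos : 0 < L₁)
    (hES1 : ∀ x : Fin d → ℝ,
      ∑ j, q j * ((θ j / n) ^ 2 * sq2 (((jac f x - jac f xs) * Pr j).mulVec (onesV n)))
        ≤ 2 * L₁ * (fbar x - fbar xs))
    (ρ : ℝ)
    (hρ : ρ = lammax (Wh *
        ((∑ j, (q j * θ j ^ 2) •
            vecMulVec ((Pr j).mulVec (onesV n)) ((Pr j).mulVec (onesV n)))
          - vecMulVec (onesV n) (onesV n)) * Wh)) :
    ∀ (x : Fin d → ℝ) (J : Matrix (Fin d) (Fin n) ℝ),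
      ∑ j, q j *
          sq2 ((1 / (n : ℝ)) • J.mulVec (onesV n)
            + (θ j / n) • ((jac f x - J) * Pr j).mulVec (onesV n))
        ≤ 4 * L₁ * (fbar x - fbar xs) + (2 * ρ / (n : ℝ) ^ 2) * wnorm2 W (J - jac f xs) := by
  intro x J
  set e := onesV n with he
  set v : Fin m → Fin n → ℝ := fun j => (Pr j) *ᵥ e with hv
  set D := jac f x - jac f xs with hD
  set R := J - jac f xs with hR
  set c : ℝ := 1 / (n : ℝ) with hc
  set u : Fin m → Fin n → ℝ := fun j => e - θ j • v j with hu
  -- Jacobian at x* kills e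
  have hje : (jac f xs) *ᵥ e = 0 := by
    funext k
    simp only [jac, mulVec, dotProduct, onesV, Matrix.of_apply, mul_one, he]
    calc (∑ i, grad (f i) xs k) = (∑ i, grad (f i) xs) k := by
          rw [Finset.sum_apply]
      _ = 0 := by rw [hcrit]; rfl
  -- decomposition
  have hdecomp : ∀ j, c • J *ᵥ e + (θ j / n) • ((jac f x - J) * Pr j) *ᵥ e
      = (θ j / n) • (D * Pr j) *ᵥ e + c • (R *ᵥ u j) := by
    intro j
    have hDR : jac f x - J = D - R := by rw [hD, hR]; abel
    have hJe : J *ᵥ e = R *ᵥ e := by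
      rw [hR, Matrix.sub_mulVec, hje, sub_zero]
    have hcθ : (θ j / n : ℝ) = c * θ j := by rw [hc]; ring
    rw [hDR, Matrix.sub_mul, Matrix.sub_mulVec, hJe, hu, hcθ]
    simp only [Matrix.mulVec_sub, Matrix.mulVec_smul, ← Matrix.mulVec_mulVec,
      smul_sub, smul_smul]
    module
  -- pointwise bound and sum splitting
  have hsplit : ∑ j, q j * sq2 (c • J *ᵥ e + (θ j / n) • ((jac f x - J) * Pr j) *ᵥ e)
      ≤ 2 * (∑ j, q j * sq2 ((θ j / n) • (D * Pr j) *ᵥ e))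
        + 2 * (∑ j, q j * sq2 (c • (R *ᵥ u j))) := by
    have hstep : ∀ j ∈ Finset.univ,
        q j * sq2 (c • J *ᵥ e + (θ j / n) • ((jac f x - J) * Pr j) *ᵥ e)
          ≤ 2 * (q j * sq2 ((θ j / n) • (D * Pr j) *ᵥ e)) + 2 * (q j * sq2 (c • (R *ᵥ u j))) := by
      intro j _
      rw [hdecomp j]
      have h1 := sq2_add_le ((θ j / n) • (D * Pr j) *ᵥ e) (c • (R *ᵥ u j))
      have h2 := mul_le_mul_of_nonneg_left h1 (hq j)
      calc q j * sq2 ((θ j / n) • (D * Pr j) *ᵥ e + c • (R *ᵥ u j))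
          ≤ q j * (2 * sq2 ((θ j / n) • (D * Pr j) *ᵥ e) + 2 * sq2 (c • (R *ᵥ u j))) := h2
        _ = 2 * (q j * sq2 ((θ j / n) • (D * Pr j) *ᵥ e)) + 2 * (q j * sq2 (c • (R *ᵥ u j))) := by
            ring
    calc ∑ j, q j * sq2 (c • J *ᵥ e + (θ j / n) • ((jac f x - J) * Pr j) *ᵥ e)
        ≤ ∑ j, (2 * (q j * sq2 ((θ j / n) • (D * Pr j) *ᵥ e))
            + 2 * (q j * sq2 (c • (R *ᵥ u j)))) := Finset.sum_le_sum hstep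
      _ = 2 * (∑ j, q j * sq2 ((θ j / n) • (D * Pr j) *ᵥ e))
            + 2 * (∑ j, q j * sq2 (c • (R *ᵥ u j))) := by
          rw [Finset.sum_add_distrib, ← Finset.mul_sum, ← Finset.mul_sum]
  -- first term
  have hterm1 : ∑ j, q j * sq2 ((θ j / n) • (D * Pr j) *ᵥ e) ≤ 2 * L₁ * (fbar x - fbar xs) := by
    simp_rw [sq2_smul]
    exact hES1 x
  -- second term as trace
  set M : Matrix (Fin n) (Fin n) ℝ :=
    (∑ j, (q j * θ j ^ 2) • vecMulVec (v j) (v j)) - vecMulVec e e with hM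
  have hterm2 : ∑ j, q j * sq2 (c • (R *ᵥ u j))
      = c ^ 2 * Matrix.trace (R * M * Rᵀ) := by
    have hub : ∀ i, (∑ j, q j * θ j * v j i) = 1 := by
      intro i
      have h := congrFun hunbiased i
      simpa [Finset.sum_apply, he, onesV, mul_assoc] using h
    have hui : ∀ j (i : Fin n), u j i = 1 - θ j * v j i := by
      intro j i; simp [hu, he, onesV]
    have hM' : (∑ j, q j • vecMulVec (u j) (u j)) = M := by
      ext i k
      simp only [Matrix.sum_apply, Matrix.smul_apply, vecMulVec_apply, smul_eq_mul,
        hM, Matrix.sub_apply]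
      calc ∑ j, q j * (u j i * u j k)
          = ∑ j, (q j * θ j ^ 2 * (v j i * v j k) - q j * θ j * v j i
              - q j * θ j * v j k + q j) := by
            refine Finset.sum_congr rfl fun j _ => ?_
            rw [hui j i, hui j k]; ring
        _ = (∑ j, q j * θ j ^ 2 * (v j i * v j k)) - (∑ j, q j * θ j * v j i)
              - (∑ j, q j * θ j * v j k) + (∑ j, q j) := by
            simp [Finset.sum_add_distrib, Finset.sum_sub_distrib]
        _ = (∑ j, q j * θ j ^ 2 * (v j i * v j k)) - onesV n i * onesV n k := by
            rw [hq1, hub i, hub k]; simp [onesV]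
    calc ∑ j, q j * sq2 (c • (R *ᵥ u j))
        = ∑ j, c ^ 2 * (q j * Matrix.trace (R * vecMulVec (u j) (u j) * Rᵀ)) := by
          refine Finset.sum_congr rfl fun j _ => ?_
          rw [sq2_smul, sq2_eq_dot, ← trace_vecMulVec]; ring
      _ = c ^ 2 * Matrix.trace (R * (∑ j, q j • vecMulVec (u j) (u j)) * Rᵀ) := by
          rw [← Finset.mul_sum]
          congr 1
          rw [Matrix.mul_sum, Matrix.sum_mul, Matrix.trace_sum]
          refine (Finset.sum_congr rfl fun j _ => ?_).symm
          rw [Matrix.mul_smul, Matrix.smul_mul, Matrix.trace_smul]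
          simp
      _ = c ^ 2 * Matrix.trace (R * M * Rᵀ) := by rw [hM']
  -- trace bound
  have htrace : Matrix.trace (R * M * Rᵀ) ≤ ρ * wnorm2 W R := by
    have hWhT : Whᵀ = Wh := by
      have h := hWh.isHermitian
      rwa [Matrix.IsHermitian, Matrix.conjTranspose_eq_transpose_of_trivial] at h
    have hdet : IsUnit Wh.det := (Matrix.isUnit_iff_isUnit_det _).mp hWh.isUnit
    have hinv1 : Wh⁻¹ * Wh = 1 := Matrix.nonsing_inv_mul _ hdet
    have hinv2 : Wh * Wh⁻¹ = 1 := Matrix.mul_nonsing_inv _ hdet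
    have hWhinvT : (Wh⁻¹)ᵀ = Wh⁻¹ := by rw [Matrix.transpose_nonsing_inv, hWhT]
    have hMT : Mᵀ = M := by
      ext i k
      simp only [Matrix.transpose_apply, hM, Matrix.sub_apply, Matrix.sum_apply,
        Matrix.smul_apply, vecMulVec_apply, smul_eq_mul, he, onesV]
      congr 1
      exact Finset.sum_congr rfl fun j _ => by ring
    set A := Wh * M * Wh with hA
    have hAH : A.IsHermitian := by
      rw [Matrix.IsHermitian, Matrix.conjTranspose_eq_transpose_of_trivial, hA,
        Matrix.transpose_mul, Matrix.transpose_mul, hWhT, hMT]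
      simp [Matrix.mul_assoc]
    have hfac : R * M * Rᵀ = (R * Wh⁻¹) * A * (R * Wh⁻¹)ᵀ := by
      have h1 : (R * Wh⁻¹) * A * (R * Wh⁻¹)ᵀ
          = R * (Wh⁻¹ * Wh) * (M * (Wh * (Wh⁻¹ * Rᵀ))) := by
        rw [Matrix.transpose_mul, hWhinvT, hA]
        simp only [Matrix.mul_assoc]
      rw [h1, hinv1, Matrix.mul_one, ← Matrix.mul_assoc Wh, hinv2, Matrix.one_mul,
        ← Matrix.mul_assoc]
    have hYY : (R * Wh⁻¹) * (R * Wh⁻¹)ᵀ = R * W⁻¹ * Rᵀ := by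
      rw [Matrix.transpose_mul, hWhinvT, ← hWh2, Matrix.mul_inv_rev]
      simp only [Matrix.mul_assoc]
    rw [hfac]
    have hb := trace_sandwich_le (R * Wh⁻¹) A hAH
    rw [hYY] at hb
    have hρA : ρ = sSup (spectrum ℝ A) := hρ
    rw [hρA]
    exact hb
  calc ∑ j, q j * sq2 (c • J *ᵥ e + (θ j / n) • ((jac f x - J) * Pr j) *ᵥ e)
      ≤ 2 * (∑ j, q j * sq2 ((θ j / n) • (D * Pr j) *ᵥ e))
        + 2 * (∑ j, q j * sq2 (c • (R *ᵥ u j))) := hsplit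
    _ ≤ 2 * (2 * L₁ * (fbar x - fbar xs)) + 2 * (c ^ 2 * (ρ * wnorm2 W R)) := by
        apply add_le_add
        · exact mul_le_mul_of_nonneg_left hterm1 (by norm_num)
        · rw [hterm2]
          have := mul_le_mul_of_nonneg_left htrace (sq_nonneg c)
          linarith
    _ = 4 * L₁ * (fbar x - fbar xs) + (2 * ρ / (n : ℝ) ^ 2) * wnorm2 W R := by
        rw [hc]; ring
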